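/- Let G be a countable discrete amenable group with right Følner sequence (F_k), Ξ an action of G by *-automorphisms on a unital C*-algebra M, ι : A → M an equivariant unital *-homomorphism from a unital C*-algebra A with G-action Θ (Ξ_g ∘ ι = ι ∘ Θ_g), and a ∈ A positive. Assume the set of Θ-invariant states on A is nonempty. Then lim_{k→∞} ‖(1/|F_k|) ∑_{g∈F_k} Ξ_g ι(a)‖ exists and equals sup { φ(a) : φ a Θ-invariant state on A vanishing on ker ι }. -/

import Mathlib

open Filter

/-- A state on a unital C*-algebra: a linear, unital, positive functional. -/
def IsState {A : Type*} [NormedRing A] [StarRing A] [NormedAlgebra ℂ A]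
    (φ : A → ℂ) : Prop :=
  (∀ x y : A, φ (x + y) = φ x + φ y) ∧
  (∀ (c : ℂ) (x : A), φ (c • x) = c * φ x) ∧
  φ 1 = 1 ∧
  ∀ a : A, 0 ≤ (φ (star a * a)).re ∧ (φ (star a * a)).im = 0

section StateBasics

variable {B : Type*} [NormedRing B] [StarRing B] [NormedAlgebra ℂ B] {φ : B → ℂ}

lemma IsState.map_zero₀ (h : IsState φ) : φ 0 = 0 := by
  have := h.2.1 0 0
  simpa using this

lemma IsState.map_neg₀ (h : IsState φ) (x : B) : φ (-x) = - φ x := by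
  have := h.2.1 (-1) x
  simpa using this

lemma IsState.map_sub₀ (h : IsState φ) (x y : B) : φ (x - y) = φ x - φ y := by
  rw [sub_eq_add_neg, h.1, h.map_neg₀, sub_eq_add_neg]

lemma IsState.map_sum₀ (h : IsState φ) {ι : Type*} (s : Finset ι) (f : ι → B) :
    φ (∑ i ∈ s, f i) = ∑ i ∈ s, φ (f i) := by
  classical
  induction s using Finset.induction_on with
  | empty => simpa using h.map_zero₀
  | insert i s' hx ih => rw [Finset.sum_insert hx, h.1, ih, Finset.sum_insert hx]

lemma IsState.map_real_smul (h : IsState φ) (r : ℝ) (x : B) :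
    φ (r • x) = r * φ x := by
  rw [← Complex.coe_smul, h.2.1]

end StateBasics

section StateCStar

variable {B : Type*} [CStarAlgebra B] [PartialOrder B] [StarOrderedRing B] {φ : B → ℂ}

lemma exists_star_mul_self' {x : B} (hx : 0 ≤ x) : ∃ d : B, x = star d * d := by
  refine ⟨CFC.sqrt x, ?_⟩
  have h1 : IsSelfAdjoint (CFC.sqrt x) := IsSelfAdjoint.of_nonneg (CFC.sqrt_nonneg x)
  rw [h1.star_eq, CFC.sqrt_mul_sqrt_self x hx]

lemma IsState.real_nonneg_of_nonneg (h : IsState φ) {x : B} (hx : 0 ≤ x) :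
    0 ≤ (φ x).re ∧ (φ x).im = 0 := by
  obtain ⟨d, rfl⟩ := exists_star_mul_self' hx
  exact h.2.2.2 d

lemma real_smul_nonneg {r : ℝ} (hr : 0 ≤ r) {y : B} (hy : 0 ≤ y) : 0 ≤ r • y := by
  obtain ⟨d, rfl⟩ := exists_star_mul_self' hy
  have h2 : star (Real.sqrt r • d) * (Real.sqrt r • d) = r • (star d * d) := by
    rw [star_smul, smul_mul_smul_comm]
    simp [Real.mul_self_sqrt hr]
  rw [← h2]
  exact star_mul_self_nonneg _

end StateCStar

section KeyBound

variable {B C : Type*} [CStarAlgebra B] [CStarAlgebra C] [Nontrivial C]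
    [PartialOrder B] [StarOrderedRing B] [PartialOrder C] [StarOrderedRing C]

/-- If a state on `B` vanishes on the kernel of a `⋆`-homomorphism `π`, then its value on a
nonnegative element is bounded by the norm of the image. -/
lemma IsState.re_le_norm_hom (π : B →⋆ₐ[ℂ] C) {φ : B → ℂ} (hφ : IsState φ)
    (hker : ∀ x, π x = 0 → φ x = 0) {y : B} (hy : 0 ≤ y) :
    (φ y).re ≤ ‖π y‖ := by
  set t : ℝ := ‖π y‖ with ht
  have hsa : IsSelfAdjoint y := .of_nonneg hy
  have hπy : 0 ≤ π y := by
    obtain ⟨d, rfl⟩ := exists_star_mul_self' hy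
    rw [map_mul, map_star]; exact star_mul_self_nonneg _
  have hcont : Continuous π := AddMonoidHomClass.continuous_of_bound π 1
    (fun x => by simpa using NonUnitalStarAlgHom.norm_apply_le π x)
  set f : ℝ → ℝ := fun s => min s t with hf
  set g : ℝ → ℝ := fun s => s - min s t with hg
  have hfc : Continuous f := by fun_prop
  have hgc : Continuous g := by fun_prop
  have h2 : π (cfc g y) = 0 := by
    rw [StarAlgHom.map_cfc π g y hgc.continuousOn hcont hsa (hsa.map π)]
    have h3 : (spectrum ℝ (π y)).EqOn g 0 := by
      intro s hs
      have h4 : s ≤ t := (Real.le_norm_self s).trans (spectrum.norm_le_norm_of_mem hs)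
      simp [hg, min_eq_left h4]
    rw [cfc_congr h3, cfc_zero]
  have h5 : cfc f y + cfc g y = y := by
    rw [← cfc_add y f g hfc.continuousOn hgc.continuousOn]
    convert cfc_id ℝ y hsa using 2
    funext s
    simp [hf, hg]
  have h6 : φ y = φ (cfc f y) := by
    have h6' := hφ.1 (cfc f y) (cfc g y)
    rw [h5] at h6'
    rw [h6', hker _ h2, add_zero]
  set z : B := cfc (fun s => t - f s) y with hz
  have h7 : cfc f y = t • (1 : B) - z := by
    rw [hz, cfc_sub (fun _ => t) f y (by fun_prop) hfc.continuousOn, cfc_const t y hsa,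
      Algebra.algebraMap_eq_smul_one]
    abel
  have h8 : 0 ≤ z := by
    refine cfc_nonneg fun s hs => ?_
    simp [hf, sub_nonneg, min_le_right]
  have h9 : (φ z).re ≥ 0 := (hφ.real_nonneg_of_nonneg h8).1
  have h10 : φ (cfc f y) = t - φ z := by
    rw [h7, sub_eq_add_neg, hφ.1, ← neg_one_smul ℝ z, hφ.map_real_smul,
      hφ.map_real_smul, hφ.2.2.1]
    push_cast
    ring
  rw [h6, h10]
  simp only [Complex.sub_re, Complex.ofReal_re]
  linarith

end KeyBound

section StateExistence

variable {D : Type*} [CStarAlgebra D] [Nontrivial D] [PartialOrder D] [StarOrderedRing D]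

lemma im_eq_zero_of_contraction (φ : D →L[ℂ] ℂ) (h1 : φ 1 = 1) (hn : ‖φ‖ ≤ 1)
    {z : D} (hz : IsSelfAdjoint z) : (φ z).im = 0 := by
  have key : ∀ r : ℝ, (φ z).re ^ 2 + ((φ z).im + r) ^ 2 ≤ ‖z‖ ^ 2 + r ^ 2 := by
    intro r
    have h2 : φ (z + (Complex.I * r) • 1) = φ z + Complex.I * r := by
      rw [map_add, map_smul, h1, smul_eq_mul, mul_one]
    have h3 : ‖z + (Complex.I * r) • 1‖ ^ 2 ≤ ‖z‖ ^ 2 + r ^ 2 := by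
      have hstar : star (Complex.I * (r:ℂ)) = -(Complex.I * (r:ℂ)) := by
        simp [Complex.ext_iff]
      have h4 : (z + (Complex.I * r) • 1) * star (z + (Complex.I * r) • 1)
          = z * z + (r ^ 2 : ℝ) • 1 := by
        simp only [star_add, hz.star_eq, star_smul, star_one]
        rw [mul_add, add_mul, add_mul]
        simp only [mul_smul_comm, smul_mul_assoc, one_mul, mul_one, smul_smul, hstar]
        have e1 : -(Complex.I * (r:ℂ)) * (Complex.I * (r:ℂ)) = ((r:ℂ))^2 := by
          rw [show -(Complex.I * (r:ℂ)) * (Complex.I * (r:ℂ))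
              = -(Complex.I * Complex.I) * (r:ℂ)^2 by ring, Complex.I_mul_I]
          ring
        have e2 : ((r:ℝ)^2 : ℝ) • (1:D) = ((r:ℂ)^2) • (1:D) := by
          rw [← Complex.coe_smul]; norm_num
        rw [e1, neg_smul, e2]
        abel
      have h5 : ‖z + (Complex.I * r) • 1‖ ^ 2 = ‖z * z + (r ^ 2 : ℝ) • 1‖ := by
        rw [← h4, CStarRing.norm_self_mul_star, sq]
      rw [h5]
      calc ‖z * z + (r ^ 2 : ℝ) • 1‖ ≤ ‖z * z‖ + ‖(r ^ 2 : ℝ) • 1‖ := norm_add_le _ _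
        _ ≤ ‖z‖ ^ 2 + r ^ 2 := by
            rw [norm_smul, norm_one, mul_one, Real.norm_of_nonneg (by positivity)]
            gcongr
            exact (norm_mul_le _ _).trans (by rw [sq])
    have h6 : ‖φ z + Complex.I * r‖ ≤ ‖z + (Complex.I * r) • 1‖ := by
      rw [← h2]
      calc ‖φ (z + (Complex.I * r) • 1)‖ ≤ ‖φ‖ * ‖z + (Complex.I * r) • 1‖ :=
            φ.le_opNorm _
        _ ≤ ‖z + (Complex.I * r) • 1‖ := by
            nlinarith [norm_nonneg (z + (Complex.I * r) • 1)]
    have h7 : ‖φ z + Complex.I * r‖ ^ 2 = (φ z).re ^ 2 + ((φ z).im + r) ^ 2 := by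
      rw [Complex.sq_norm]
      simp [Complex.normSq_apply]
      ring
    nlinarith [norm_nonneg (φ z + Complex.I * (r:ℂ)),
      mul_self_le_mul_self (norm_nonneg (φ z + Complex.I * (r:ℂ))) h6, h3, h7]
  by_contra him
  have h8 := key ((‖z‖ ^ 2 + 1) / (2 * (φ z).im))
  set s : ℝ := (φ z).im
  have h9 : 2 * ((‖z‖ ^ 2 + 1) / (2 * s)) * s = ‖z‖ ^ 2 + 1 := by
    field_simp
  nlinarith [sq_nonneg (φ z).re, sq_nonneg s]

lemma isState_of_contraction (φ : D →L[ℂ] ℂ) (h1 : φ 1 = 1) (hn : ‖φ‖ ≤ 1) :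
    IsState (⇑φ) := by
  refine ⟨fun x y => map_add φ x y, fun c x => by rw [map_smul, smul_eq_mul], h1, fun c => ?_⟩
  set x : D := star c * c with hx
  have hxnn : 0 ≤ x := star_mul_self_nonneg c
  have hxsa : IsSelfAdjoint x := .of_nonneg hxnn
  have him : (φ x).im = 0 := im_eq_zero_of_contraction φ h1 hn hxsa
  refine ⟨?_, him⟩
  set t : ℝ := ‖x‖ with ht
  have hle : x ≤ t • (1 : D) := by
    simpa [Algebra.algebraMap_eq_smul_one] using hxsa.le_algebraMap_norm_self
  have hnn2 : 0 ≤ t • (1 : D) - x := sub_nonneg.mpr hle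
  have hb : ‖t • (1 : D) - x‖ ≤ t := by
    have h3 : t • (1 : D) - x ≤ t • (1 : D) := by
      simpa using hxnn
    calc ‖t • (1 : D) - x‖ ≤ ‖t • (1 : D)‖ :=
          CStarAlgebra.norm_le_norm_of_nonneg_of_le hnn2 h3
      _ = t := by rw [norm_smul, norm_one, mul_one, Real.norm_of_nonneg (norm_nonneg x)]
  have hφsub : φ (t • (1:D) - x) = (t : ℂ) - φ x := by
    rw [map_sub, ← Complex.coe_smul, map_smul, h1, smul_eq_mul, mul_one]
  have h6 : ‖(t:ℂ) - φ x‖ ≤ t := by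
    rw [← hφsub]
    calc ‖φ (t • (1:D) - x)‖ ≤ ‖φ‖ * ‖t • (1:D) - x‖ := φ.le_opNorm _
      _ ≤ t := by nlinarith [norm_nonneg (t • (1:D) - x), norm_nonneg φ]
  have h7 : t - (φ x).re ≤ ‖(t:ℂ) - φ x‖ := by
    calc t - (φ x).re = ((t:ℂ) - φ x).re := by simp
      _ ≤ ‖(t:ℂ) - φ x‖ := Complex.re_le_norm _
  linarith

open Pointwise in
lemma exists_state_attaining_norm {y : D} (hy : 0 ≤ y) :
    ∃ φ : D →L[ℂ] ℂ, ‖φ‖ ≤ 1 ∧ φ 1 = 1 ∧ φ y = (‖y‖ : ℂ) := by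
  by_cases hy0 : y = 0
  · obtain ⟨g, hg1, hgx⟩ := exists_dual_vector ℂ (1 : D) (by simp)
    exact ⟨g, hg1.le, by simpa using hgx, by simp [hy0]⟩
  · set u : D := ‖y‖⁻¹ • y with hu
    have hyn : (0:ℝ) < ‖y‖ := norm_pos_iff.mpr hy0
    have hun : ‖u‖ = 1 := by
      rw [hu, norm_smul, Real.norm_of_nonneg (by positivity), inv_mul_cancel₀ hyn.ne']
    have hupos : 0 ≤ u := real_smul_nonneg (by positivity) hy
    set x : D := 1 + u with hx
    have hxnorm : ‖x‖ = 2 := by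
      refine le_antisymm ?_ ?_
      · calc ‖x‖ ≤ ‖(1:D)‖ + ‖u‖ := norm_add_le _ _
          _ = 2 := by rw [norm_one, hun]; norm_num
      · have hmem : ‖u‖ ∈ spectrum ℝ u := CStarAlgebra.norm_mem_spectrum_of_nonneg hupos
        have hmem2 : (1 : ℝ) + ‖u‖ ∈ spectrum ℝ x := by
          have he := spectrum.singleton_add_eq (R := ℝ) u 1
          have h1m : (1:ℝ) + ‖u‖ ∈ ({(1:ℝ)} + spectrum ℝ u : Set ℝ) :=
            Set.add_mem_add rfl hmem
          rw [he] at h1m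
          simpa [hx] using h1m
        have h2m := spectrum.norm_le_norm_of_mem hmem2
        rw [hun] at h2m
        norm_num at h2m
        exact h2m
    have hxne : x ≠ 0 := by
      intro h; rw [h, norm_zero] at hxnorm; norm_num at hxnorm
    obtain ⟨g, hg1, hgx⟩ := exists_dual_vector ℂ x (by rw [hxnorm]; norm_num)
    rw [hxnorm] at hgx
    have hsum : g 1 + g u = 2 := by
      rw [← map_add]
      simpa [hx] using hgx
    have hb1 : ‖g (1:D)‖ ≤ 1 := by
      calc ‖g (1:D)‖ ≤ ‖g‖ * ‖(1:D)‖ := g.le_opNorm _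
        _ = 1 := by rw [hg1, norm_one, one_mul]
    have hbu : ‖g u‖ ≤ 1 := by
      calc ‖g u‖ ≤ ‖g‖ * ‖u‖ := g.le_opNorm _
        _ = 1 := by rw [hg1, hun, one_mul]
    have hre : (g 1).re + (g u).re = 2 := by
      have := congrArg Complex.re hsum
      simpa using this
    have hre1 : (g (1:D)).re ≤ 1 := (Complex.re_le_norm _).trans hb1
    have hreu : (g u).re ≤ 1 := (Complex.re_le_norm _).trans hbu
    have hre1' : (g (1:D)).re = 1 := by linarith
    have hreu' : (g u).re = 1 := by linarith
    have him : ∀ w : D, ‖g w‖ ≤ 1 → (g w).re = 1 → (g w).im = 0 := by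
      intro w hbw hrew
      have habs : ‖g w‖ ≤ 1 := hbw
      have h3 : ‖g w‖ ^ 2 = (g w).re ^ 2 + (g w).im ^ 2 := by
        rw [Complex.sq_norm, Complex.normSq_apply]; ring
      have h4 : (g w).im ^ 2 = 0 := by
        refine le_antisymm ?_ (sq_nonneg _)
        nlinarith [norm_nonneg (g w)]
      exact pow_eq_zero_iff (by norm_num) |>.mp h4
    have him1 : (g (1:D)).im = 0 := him 1 hb1 hre1'
    have himu : (g u).im = 0 := him u hbu hreu'
    have hg1v : g (1:D) = 1 := Complex.ext (by simpa using hre1') (by simpa using him1)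
    have hguv : g u = 1 := Complex.ext (by simpa using hreu') (by simpa using himu)
    refine ⟨g, hg1.le, hg1v, ?_⟩
    have hyu : y = ‖y‖ • u := by
      rw [hu, smul_smul, mul_inv_cancel₀ hyn.ne', one_smul]
    rw [hyu, ← Complex.coe_smul, map_smul, hguv, smul_eq_mul, mul_one]
    simp [norm_smul, hun, Real.norm_of_nonneg hyn.le]

end StateExistence

lemma card_symmDiff_eq {α : Type*} [DecidableEq α] (s t : Finset α) :
    (symmDiff s t).card = (s \ t).card + (t \ s).card := by
  rw [symmDiff_def, Finset.sup_eq_union, Finset.card_union_of_disjoint disjoint_sdiff_sdiff]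

/-- Main theorem (possibly non-faithful C*-model): the norms of the Følner
averages of `ι(a)` converge to `m(a | Ann(ker ι))`, the supremum of `ψ(a)`
over invariant states `ψ` on `A` vanishing on `ker ι`. -/
theorem norm_average_tendsto_ergodic_max_of_model
    {G : Type*} [Group G] [DecidableEq G] [Countable G] {A M : Type*}
    [NormedRing A] [StarRing A] [CStarRing A] [NormedAlgebra ℂ A] [StarModule ℂ A]
    [CompleteSpace A]
    [NormedRing M] [StarRing M] [CStarRing M] [NormedAlgebra ℂ M] [StarModule ℂ M]
    [CompleteSpace M]
    (F : ℕ → Finset G) (hne : ∀ k, (F k).Nonempty)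
    (hFolner : ∀ g : G,
      Tendsto (fun k => ((symmDiff (F k) ((F k).image (· * g))).card : ℝ) / (F k).card)
        atTop (nhds 0))
    (Θ : G → A ≃⋆ₐ[ℂ] A) (hΘ : ∀ g h : G, ∀ x : A, Θ (g * h) x = Θ g (Θ h x))
    (Ξ : G → M ≃⋆ₐ[ℂ] M) (hΞ : ∀ g h : G, ∀ y : M, Ξ (g * h) y = Ξ g (Ξ h y))
    (ι : A →⋆ₐ[ℂ] M) (hequiv : ∀ (g : G) (x : A), Ξ g (ι x) = ι (Θ g x))
    (hstate : ∃ ψ : A → ℂ, IsState ψ ∧ ∀ (g : G) (x : A), ψ (Θ g x) = ψ x)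
    (a : A) (ha : ∃ b : A, a = star b * b) :
    Tendsto (fun k => ‖((F k).card : ℂ)⁻¹ • ∑ g ∈ F k, Ξ g (ι a)‖) atTop
      (nhds (sSup {r : ℝ | ∃ ψ : A → ℂ, IsState ψ ∧
        (∀ (g : G) (x : A), ψ (Θ g x) = ψ x) ∧
        (∀ x : A, ι x = 0 → ψ x = 0) ∧ (ψ a).re = r})) := by
  classical
  letI : CStarAlgebra A := {}
  letI : CStarAlgebra M := {}
  letI : PartialOrder A := CStarAlgebra.spectralOrder A
  letI : StarOrderedRing A := CStarAlgebra.spectralOrderedRing A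
  letI : PartialOrder M := CStarAlgebra.spectralOrder M
  letI : StarOrderedRing M := CStarAlgebra.spectralOrderedRing M
  obtain ⟨b, hab⟩ := ha
  set S : Set ℝ := {r : ℝ | ∃ ψ : A → ℂ, IsState ψ ∧
      (∀ (g : G) (x : A), ψ (Θ g x) = ψ x) ∧
      (∀ x : A, ι x = 0 → ψ x = 0) ∧ (ψ a).re = r} with hSdef
  by_cases hMtriv : Subsingleton M
  · have hSempty : S = ∅ := by
      ext r
      simp only [hSdef, Set.mem_setOf_eq, Set.mem_empty_iff_false, iff_false]
      rintro ⟨ψ, hψ, -, hker, -⟩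
      have h1 : ι 1 = 0 := Subsingleton.elim _ _
      have h2 := hker 1 h1
      rw [hψ.2.2.1] at h2
      exact one_ne_zero h2
    rw [hSempty, Real.sSup_empty]
    have hzero : ∀ k, ‖((F k).card : ℂ)⁻¹ • ∑ g ∈ F k, Ξ g (ι a)‖ = 0 := by
      intro k
      have h3 : (((F k).card : ℂ)⁻¹ • ∑ g ∈ F k, Ξ g (ι a)) = 0 := Subsingleton.elim _ _
      rw [h3, norm_zero]
    simpa [hzero] using (tendsto_const_nhds : Tendsto (fun _ : ℕ => (0:ℝ)) atTop (nhds 0))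
  have hM' : Nontrivial M := not_subsingleton_iff_nontrivial.mp hMtriv
  set c : ℕ → ℝ := fun k => ‖((F k).card : ℂ)⁻¹ • ∑ g ∈ F k, Ξ g (ι a)‖ with hcdef
  have hcardR : ∀ k, (0:ℝ) < ((F k).card : ℝ) := by
    intro k; exact_mod_cast Finset.card_pos.mpr (hne k)
  have hcardC : ∀ k, ((F k).card : ℂ) ≠ 0 := by
    intro k
    exact Nat.cast_ne_zero.mpr (Finset.card_pos.mpr (hne k)).ne'
  have hinvC : ∀ k, ((F k).card : ℂ)⁻¹ = ((((F k).card : ℝ)⁻¹ : ℝ) : ℂ) := by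
    intro k; norm_num
  have hpos : ∀ k, 0 ≤ ((F k).card : ℂ)⁻¹ • ∑ g ∈ F k, Ξ g (ι a) := by
    intro k
    rw [hinvC k, Complex.coe_smul]
    refine real_smul_nonneg (by positivity) (Finset.sum_nonneg fun g _ => ?_)
    rw [hab, map_mul, map_star, map_mul, map_star]
    exact star_mul_self_nonneg _
  have step1 : ∀ r ∈ S, ∀ k, r ≤ c k := by
    rintro r ⟨ψ, hψ, hinv, hker, hval⟩ k
    set y : A := ((F k).card : ℂ)⁻¹ • ∑ g ∈ F k, Θ g a with hy
    have hιy : ι y = ((F k).card : ℂ)⁻¹ • ∑ g ∈ F k, Ξ g (ι a) := by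
      rw [hy, map_smul, map_sum]
      congr 1
      exact Finset.sum_congr rfl fun g _ => (hequiv g a).symm
    have hynn : 0 ≤ y := by
      rw [hy, hinvC k, Complex.coe_smul]
      refine real_smul_nonneg (by positivity) (Finset.sum_nonneg fun g _ => ?_)
      rw [hab, map_mul, map_star]
      exact star_mul_self_nonneg _
    have hψy : ψ y = ψ a := by
      rw [hy, hψ.2.1, hψ.map_sum₀]
      rw [Finset.sum_congr rfl fun g _ => hinv g a, Finset.sum_const, nsmul_eq_mul,
        ← mul_assoc, inv_mul_cancel₀ (hcardC k), one_mul]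
    have hkey := IsState.re_le_norm_hom ι hψ hker hynn
    rw [hψy, hval, hιy] at hkey
    exact hkey
  have hstep2 : ∀ k, ∃ φ : M →L[ℂ] ℂ, ‖φ‖ ≤ 1 ∧ φ 1 = 1 ∧
      φ (((F k).card : ℂ)⁻¹ • ∑ g ∈ F k, Ξ g (ι a)) = (c k : ℂ) :=
    fun k => exists_state_attaining_norm (hpos k)
  choose φk hφk1 hφkone hφkval using hstep2
  have hφkstate : ∀ k, IsState (⇑(φk k)) := fun k => isState_of_contraction _ (hφkone k) (hφk1 k)
  set ψf : ℕ → M → ℂ := fun k y => ((F k).card : ℂ)⁻¹ * ∑ g ∈ F k, φk k (Ξ g y) with hψfdef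
  -- each ψf k is a state
  have hψfadd : ∀ k x y, ψf k (x + y) = ψf k x + ψf k y := by
    intro k x y
    simp only [hψfdef, map_add, Finset.sum_add_distrib, mul_add]
  have hψfsmul : ∀ k (cc : ℂ) x, ψf k (cc • x) = cc * ψf k x := by
    intro k cc x
    simp only [hψfdef, map_smul, smul_eq_mul]
    rw [← Finset.mul_sum]
    ring
  have hψfone : ∀ k, ψf k 1 = 1 := by
    intro k
    simp only [hψfdef, map_one, hφkone, Finset.sum_const, nsmul_eq_mul, mul_one]
    exact inv_mul_cancel₀ (hcardC k)
  have hψfposit : ∀ k (w : M), 0 ≤ (ψf k (star w * w)).re ∧ (ψf k (star w * w)).im = 0 := by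
    intro k w
    have hterm : ∀ g : G, 0 ≤ (φk k (Ξ g (star w * w))).re ∧ (φk k (Ξ g (star w * w))).im = 0 := by
      intro g
      rw [map_mul, map_star]
      exact (hφkstate k).2.2.2 _
    have hre : (ψf k (star w * w)).re
        = ((F k).card : ℝ)⁻¹ * ∑ g ∈ F k, (φk k (Ξ g (star w * w))).re := by
      rw [hψfdef]
      simp only [hinvC k, Complex.re_ofReal_mul, Complex.re_sum]
    have him : (ψf k (star w * w)).im
        = ((F k).card : ℝ)⁻¹ * ∑ g ∈ F k, (φk k (Ξ g (star w * w))).im := by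
      rw [hψfdef]
      simp only [hinvC k, Complex.im_ofReal_mul, Complex.im_sum]
    constructor
    · rw [hre]
      exact mul_nonneg (by positivity) (Finset.sum_nonneg fun g _ => (hterm g).1)
    · rw [him, Finset.sum_congr rfl fun g _ => (hterm g).2, Finset.sum_const_zero, mul_zero]
  have hψfstate : ∀ k, IsState (ψf k) :=
    fun k => ⟨hψfadd k, hψfsmul k, hψfone k, hψfposit k⟩
  -- uniform bound
  have hψfbd : ∀ k y, ‖ψf k y‖ ≤ ‖y‖ := by
    intro k y
    have h1 : ‖∑ g ∈ F k, φk k (Ξ g y)‖ ≤ ((F k).card : ℝ) * ‖y‖ := by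
      refine (norm_sum_le _ _).trans ?_
      have h2 : ∀ g ∈ F k, ‖φk k (Ξ g y)‖ ≤ ‖y‖ := by
        intro g _
        calc ‖φk k (Ξ g y)‖ ≤ ‖φk k‖ * ‖Ξ g y‖ := (φk k).le_opNorm _
          _ ≤ ‖Ξ g y‖ := by
              nlinarith [norm_nonneg (Ξ g y), norm_nonneg (φk k), hφk1 k]
          _ = ‖y‖ := StarAlgEquiv.norm_map (Ξ g) y
      calc ∑ g ∈ F k, ‖φk k (Ξ g y)‖ ≤ ∑ _g ∈ F k, ‖y‖ := Finset.sum_le_sum h2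
        _ = ((F k).card : ℝ) * ‖y‖ := by rw [Finset.sum_const, nsmul_eq_mul]
    have h3 : ‖ψf k y‖ = ((F k).card : ℝ)⁻¹ * ‖∑ g ∈ F k, φk k (Ξ g y)‖ := by
      rw [hψfdef]
      simp only [norm_mul, norm_inv, Complex.norm_natCast]
    rw [h3]
    calc ((F k).card : ℝ)⁻¹ * ‖∑ g ∈ F k, φk k (Ξ g y)‖
        ≤ ((F k).card : ℝ)⁻¹ * (((F k).card : ℝ) * ‖y‖) := by
          exact mul_le_mul_of_nonneg_left h1 (by positivity)
      _ = ‖y‖ := by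
          rw [← mul_assoc, inv_mul_cancel₀ (hcardR k).ne', one_mul]
  -- value at ι a
  have hψfval : ∀ k, ψf k (ι a) = (c k : ℂ) := by
    intro k
    rw [← hφkval k, map_smul, smul_eq_mul, map_sum, hψfdef]
  -- approximate invariance
  have hψfinv : ∀ k (h : G) (y : M),
      ‖ψf k (Ξ h y) - ψf k y‖
        ≤ ((symmDiff (F k) ((F k).image (· * h))).card : ℝ) / (F k).card * ‖y‖ := by
    intro k h y
    set s : Finset G := F k with hs
    set t : Finset G := s.image (· * h) with hts
    set f : G → ℂ := fun g => φk k (Ξ g y) with hfdef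
    have hterm : ∀ g : G, ‖f g‖ ≤ ‖y‖ := by
      intro g
      calc ‖φk k (Ξ g y)‖ ≤ ‖φk k‖ * ‖Ξ g y‖ := (φk k).le_opNorm _
        _ ≤ ‖Ξ g y‖ := by
            nlinarith [norm_nonneg (Ξ g y), norm_nonneg (φk k), hφk1 k]
        _ = ‖y‖ := StarAlgEquiv.norm_map (Ξ g) y
    have he1 : ∑ g ∈ s, φk k (Ξ g (Ξ h y)) = ∑ g ∈ t, f g := by
      rw [hts, Finset.sum_image (fun x₁ _ x₂ _ hx => mul_left_injective h hx)]
      exact Finset.sum_congr rfl fun g _ => by rw [hfdef, ← hΞ g h y]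
    have he2 : ψf k (Ξ h y) - ψf k y
        = ((F k).card : ℂ)⁻¹ * (∑ g ∈ t, f g - ∑ g ∈ s, f g) := by
      rw [hψfdef]
      simp only []
      rw [he1]
      ring
    have he3 : ∑ g ∈ t, f g - ∑ g ∈ s, f g = ∑ g ∈ t \ s, f g - ∑ g ∈ s \ t, f g :=
      (Finset.sum_sdiff_sub_sum_sdiff).symm
    have he4 : ‖∑ g ∈ t, f g - ∑ g ∈ s, f g‖
        ≤ ((symmDiff s t).card : ℝ) * ‖y‖ := by
      rw [he3]
      calc ‖∑ g ∈ t \ s, f g - ∑ g ∈ s \ t, f g‖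
          ≤ ‖∑ g ∈ t \ s, f g‖ + ‖∑ g ∈ s \ t, f g‖ := norm_sub_le _ _
        _ ≤ ((t \ s).card : ℝ) * ‖y‖ + ((s \ t).card : ℝ) * ‖y‖ := by
            gcongr
            · refine (norm_sum_le _ _).trans ?_
              calc ∑ g ∈ t \ s, ‖f g‖ ≤ ∑ _g ∈ t \ s, ‖y‖ :=
                    Finset.sum_le_sum fun g _ => hterm g
                _ = ((t \ s).card : ℝ) * ‖y‖ := by rw [Finset.sum_const, nsmul_eq_mul]
            · refine (norm_sum_le _ _).trans ?_
              calc ∑ g ∈ s \ t, ‖f g‖ ≤ ∑ _g ∈ s \ t, ‖y‖ :=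
                    Finset.sum_le_sum fun g _ => hterm g
                _ = ((s \ t).card : ℝ) * ‖y‖ := by rw [Finset.sum_const, nsmul_eq_mul]
        _ = ((symmDiff s t).card : ℝ) * ‖y‖ := by
            rw [card_symmDiff_eq]
            push_cast
            ring
    rw [he2, norm_mul, norm_inv, Complex.norm_natCast]
    calc ((F k).card : ℝ)⁻¹ * ‖∑ g ∈ t, f g - ∑ g ∈ s, f g‖
        ≤ ((F k).card : ℝ)⁻¹ * (((symmDiff s t).card : ℝ) * ‖y‖) :=
          mul_le_mul_of_nonneg_left he4 (by positivity)
      _ = ((symmDiff (F k) ((F k).image (· * h))).card : ℝ) / (F k).card * ‖y‖ := by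
          rw [hs, hts]
          ring
  -- conclude via ultrafilters
  rw [Filter.tendsto_iff_ultrafilter]
  intro U hU
  have hlim : ∀ y : M, ∃ z : ℂ, Tendsto (fun k => ψf k y) (↑U) (nhds z) := by
    intro y
    have hcomp : IsCompact (Metric.closedBall (0:ℂ) ‖y‖) := isCompact_closedBall _ _
    have hle : ↑(U.map fun k => ψf k y) ≤ 𝓟 (Metric.closedBall (0:ℂ) ‖y‖) := by
      rw [Filter.le_principal_iff, Ultrafilter.mem_coe, Ultrafilter.mem_map]
      refine Filter.univ_mem' fun k => ?_
      rw [Set.mem_preimage, Metric.mem_closedBall, dist_zero_right]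
      exact hψfbd k y
    obtain ⟨z, _, hz⟩ := hcomp.ultrafilter_le_nhds _ hle
    refine ⟨z, ?_⟩
    rwa [Ultrafilter.coe_map] at hz
  choose Ψ hΨ using hlim
  have hΨzero : Ψ 0 = 0 := by
    refine tendsto_nhds_unique (hΨ 0) ?_
    have h0 : ∀ k, ψf k (0:M) = 0 := fun k => (hψfstate k).map_zero₀
    simpa [h0] using (tendsto_const_nhds : Tendsto (fun _ : ℕ => (0:ℂ)) ↑U (nhds 0))
  have hΨadd : ∀ x y : M, Ψ (x + y) = Ψ x + Ψ y := by
    intro x y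
    refine tendsto_nhds_unique (hΨ (x + y)) ?_
    exact ((hΨ x).add (hΨ y)).congr fun k => (hψfadd k x y).symm
  have hΨsmul : ∀ (cc : ℂ) (x : M), Ψ (cc • x) = cc * Ψ x := by
    intro cc x
    refine tendsto_nhds_unique (hΨ (cc • x)) ?_
    exact ((hΨ x).const_mul cc).congr fun k => (hψfsmul k cc x).symm
  have hΨone : Ψ 1 = 1 := by
    refine tendsto_nhds_unique (hΨ 1) ?_
    simpa [hψfone] using (tendsto_const_nhds : Tendsto (fun _ : ℕ => (1:ℂ)) ↑U (nhds 1))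
  have hΨpos : ∀ w : M, 0 ≤ (Ψ (star w * w)).re ∧ (Ψ (star w * w)).im = 0 := by
    intro w
    have hK : IsClosed {z : ℂ | 0 ≤ z.re ∧ z.im = 0} :=
      (isClosed_le continuous_const Complex.continuous_re).inter
        (isClosed_eq Complex.continuous_im continuous_const)
    exact hK.mem_of_tendsto (hΨ (star w * w))
      (Filter.Eventually.of_forall fun k => hψfposit k w)
  have hΨstate : IsState Ψ := ⟨hΨadd, hΨsmul, hΨone, hΨpos⟩
  have hΨinv : ∀ (h : G) (y : M), Ψ (Ξ h y) = Ψ y := by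
    intro h y
    have hdiff : Tendsto (fun k => ψf k (Ξ h y) - ψf k y) ↑U
        (nhds (Ψ (Ξ h y) - Ψ y)) := (hΨ (Ξ h y)).sub (hΨ y)
    have hzero : Tendsto (fun k => ψf k (Ξ h y) - ψf k y) ↑U (nhds 0) := by
      have hb : Tendsto (fun k =>
          ((symmDiff (F k) ((F k).image (· * h))).card : ℝ) / (F k).card * ‖y‖)
          atTop (nhds 0) := by
        simpa using (hFolner h).mul_const ‖y‖
      exact squeeze_zero_norm (fun k => hψfinv k h y) (hb.mono_left hU)
    have := tendsto_nhds_unique hdiff hzero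
    exact sub_eq_zero.mp this
  -- the induced invariant state on A
  set ψA : A → ℂ := fun x => Ψ (ι x) with hψAdef
  have hψAstate : IsState ψA := by
    refine ⟨fun x y => by rw [hψAdef]; simp only [map_add, hΨadd],
      fun cc x => by rw [hψAdef]; simp only [map_smul, hΨsmul],
      by rw [hψAdef]; simp only [map_one, hΨone],
      fun x => by rw [hψAdef]; simp only [map_mul, map_star]; exact hΨpos (ι x)⟩
  have hψAinv : ∀ (g : G) (x : A), ψA (Θ g x) = ψA x := by
    intro g x
    rw [hψAdef]
    simp only [← hequiv g x, hΨinv]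
  have hψAker : ∀ x : A, ι x = 0 → ψA x = 0 := by
    intro x hx
    rw [hψAdef]
    simp only [hx, hΨzero]
  have hmem : (Ψ (ι a)).re ∈ S := ⟨ψA, hψAstate, hψAinv, hψAker, rfl⟩
  -- convergence of c along U to (Ψ (ι a)).re
  have hcval : Tendsto (fun k => (c k : ℂ)) ↑U (nhds (Ψ (ι a))) :=
    (hΨ (ι a)).congr fun k => hψfval k
  have hcre : Tendsto c ↑U (nhds ((Ψ (ι a)).re)) := by
    have := (Complex.continuous_re.tendsto (Ψ (ι a))).comp hcval
    simpa [Function.comp_def] using this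
  have hbdd : BddAbove S := ⟨c 0, fun r hr => step1 r hr 0⟩
  have hle1 : (Ψ (ι a)).re ≤ sSup S := le_csSup hbdd hmem
  have hge2 : sSup S ≤ (Ψ (ι a)).re := by
    refine ge_of_tendsto hcre (Filter.Eventually.of_forall fun k => ?_)
    exact Real.sSup_le (fun r hr => step1 r hr k) (norm_nonneg _)
  have hfin : (Ψ (ι a)).re = sSup S := le_antisymm hle1 hge2
  rw [← hfin]
  exact hcre
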